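/- For subspaces h₁A of H_A and h₁B, h₂B of H_B, the tensor-product subspaces satisfy h₁A ⊗ (h₁B ⊓ h₂B) = (h₁A ⊗ h₁B) ⊓ (h₁A ⊗ h₂B) inside H_A ⊗ H_B. -/

import Mathlib

open scoped TensorProduct

variable {HA HB : Type*} [NormedAddCommGroup HA] [InnerProductSpace ℂ HA]
  [FiniteDimensional ℂ HA] [NormedAddCommGroup HB] [InnerProductSpace ℂ HB]
  [FiniteDimensional ℂ HB]

/-- The subspace of `HA ⊗ HB` spanned by elementary tensors `a ⊗ b` with `a ∈ u`, `b ∈ v`. -/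
def tensorSub (u : Submodule ℂ HA) (v : Submodule ℂ HB) : Submodule ℂ (HA ⊗[ℂ] HB) :=
  Submodule.span ℂ {x | ∃ a ∈ u, ∃ b ∈ v, x = a ⊗ₜ[ℂ] b}

/-- The coordinate equivalence of `HA ⊗ HB` with `η →₀ HB` induced by a basis of `HA`. -/
noncomputable def tensEquiv {η : Type*} [DecidableEq η] (b : Module.Basis η ℂ HA) :
    HA ⊗[ℂ] HB ≃ₗ[ℂ] (η →₀ HB) :=
  (TensorProduct.congr b.repr (LinearEquiv.refl ℂ HB)).trans
    (TensorProduct.finsuppScalarLeft ℂ HB η)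

lemma tensEquiv_tmul {η : Type*} [DecidableEq η] (b : Module.Basis η ℂ HA) (a : HA) (n : HB) (i : η) :
    tensEquiv b (a ⊗ₜ[ℂ] n) i = b.repr a i • n := by
  simp [tensEquiv]

lemma tensEquiv_symm_single {η : Type*} [DecidableEq η] (b : Module.Basis η ℂ HA) (i : η) (n : HB) :
    (tensEquiv (HB := HB) b).symm (Finsupp.single i n) = b i ⊗ₜ[ℂ] n := by
  simp [tensEquiv, Module.Basis.repr_symm_single_one]

lemma tensEquiv_symm_eq {η : Type*} [DecidableEq η] (b : Module.Basis η ℂ HA) (f : η →₀ HB) :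
    (tensEquiv (HB := HB) b).symm f = f.sum fun i n => b i ⊗ₜ[ℂ] n := by
  induction f using Finsupp.induction_linear with
  | zero => simp
  | add f g hf hg =>
    rw [map_add, hf, hg, Finsupp.sum_add_index]
    · simp
    · intros; simp [TensorProduct.tmul_add]
  | single i n =>
    rw [tensEquiv_symm_single, Finsupp.sum_single_index (by simp)]

lemma mem_tensorSub_iff {η : Type*} [DecidableEq η] (b : Module.Basis η ℂ HA) (S : Set η)
    (u : Submodule ℂ HA) (hu : u = Submodule.span ℂ (b '' S)) (v : Submodule ℂ HB)
    (x : HA ⊗[ℂ] HB) :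
    x ∈ tensorSub u v ↔ ∀ j, tensEquiv b x j ∈ v ∧ (j ∉ S → tensEquiv b x j = 0) := by
  constructor
  · intro hx
    induction hx using Submodule.span_induction with
    | mem x hx =>
      obtain ⟨a, ha, n, hn, rfl⟩ := hx
      intro j
      rw [tensEquiv_tmul]
      refine ⟨v.smul_mem _ hn, fun hj => ?_⟩
      have : ↑(b.repr a).support ⊆ S := b.mem_span_image.mp (hu ▸ ha)
      have hz : b.repr a j = 0 := by
        by_contra hne
        exact hj (this (Finsupp.mem_support_iff.mpr hne))
      rw [hz, zero_smul]
    | zero => intro j; simp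
    | add x y _ _ hx hy =>
      intro j
      rw [map_add, Finsupp.add_apply]
      exact ⟨v.add_mem (hx j).1 (hy j).1,
        fun hj => by rw [(hx j).2 hj, (hy j).2 hj, add_zero]⟩
    | smul c x _ hx =>
      intro j
      rw [map_smul, Finsupp.smul_apply]
      exact ⟨v.smul_mem _ (hx j).1, fun hj => by rw [(hx j).2 hj, smul_zero]⟩
  · intro h
    classical
    have hx : x = ((tensEquiv b x).sum fun i n => b i ⊗ₜ[ℂ] n) := by
      conv_lhs => rw [← (tensEquiv (HB := HB) b).symm_apply_apply x]
      rw [tensEquiv_symm_eq]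
    rw [hx]
    refine Submodule.sum_mem _ fun i _ => ?_
    by_cases hiS : i ∈ S
    · exact Submodule.subset_span ⟨b i, hu ▸ Submodule.subset_span ⟨i, hiS, rfl⟩,
        tensEquiv b x i, (h i).1, rfl⟩
    · show b i ⊗ₜ[ℂ] tensEquiv b x i ∈ tensorSub u v
      rw [(h i).2 hiS, TensorProduct.tmul_zero]
      exact Submodule.zero_mem _

theorem stmt_12 (h1A : Submodule ℂ HA) (h1B h2B : Submodule ℂ HB) :
    tensorSub h1A (h1B ⊓ h2B) = tensorSub h1A h1B ⊓ tensorSub h1A h2B := by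
  classical
  -- build a basis of `HA` adapted to `h1A`
  set f : Module.Basis.ofVectorSpaceIndex ℂ h1A → HA := fun i => ((i : h1A) : HA) with hf_def
  have hf : LinearIndependent ℂ f := by
    have := (Module.Basis.ofVectorSpace ℂ h1A).linearIndependent
    rw [Module.Basis.coe_ofVectorSpace] at this
    exact this.map' h1A.subtype (Submodule.ker_subtype _)
  have hs : LinearIndependent ℂ ((↑) : Set.range f → HA) := hf.linearIndepOn_id
  let b : Module.Basis _ ℂ HA := Module.Basis.extend hs
  set S : Set ↥(LinearIndepOn.extend (v := id) (s := Set.range f) hs (Set.subset_univ _)) := {j | (j : HA) ∈ Set.range f} with hS_def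
  have hbS : b '' S = Set.range f := by
    ext y
    constructor
    · rintro ⟨j, hj, rfl⟩
      have hbj : b j = (j : HA) := congrFun (Module.Basis.coe_extend hs) _
      rw [hbj]
      exact hj
    · intro hy
      exact ⟨⟨y, LinearIndepOn.subset_extend (v := id) (s := Set.range f) hs _ hy⟩, hy, congrFun (Module.Basis.coe_extend hs) _⟩
  have hu : h1A = Submodule.span ℂ (b '' S) := by
    rw [hbS]
    have : Set.range f = h1A.subtype '' Set.range ((↑) : Module.Basis.ofVectorSpaceIndex ℂ h1A → h1A) := by
      rw [← Set.range_comp]; rfl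
    rw [this, ← Submodule.map_span, ← Module.Basis.coe_ofVectorSpace,
      Module.Basis.span_eq, Submodule.map_top, Submodule.range_subtype]
  ext x
  rw [Submodule.mem_inf, mem_tensorSub_iff b S h1A hu, mem_tensorSub_iff b S h1A hu,
    mem_tensorSub_iff b S h1A hu]
  constructor
  · intro h
    exact ⟨fun j => ⟨((h j).1).1, (h j).2⟩, fun j => ⟨((h j).1).2, (h j).2⟩⟩
  · rintro ⟨h1, h2⟩ j
    exact ⟨⟨(h1 j).1, (h2 j).1⟩, (h1 j).2⟩
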